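/- Let μ₀ ∈ ℝ and let u₀, u_g be Schwartz functions with u₀'' + V·u₀ = -μ₀·u₀ and u_g'' + V·u_g + μ₀·u_g = u₀ (a non-diagonal Jordan block at an exceptional point). Then the 2×2 Gram matrix M with entries M₁₁ = ⟨u₀,u₀⟩_PT, M₁₂ = ⟨u₀,u_g⟩_PT, M₂₁ = ⟨u_g,u₀⟩_PT, M₂₂ = ⟨u_g,u_g⟩_PT satisfies M₁₁ = 0 and det M = -|⟨u₀,u_g⟩_PT|²; in particular, if ⟨u₀,u_g⟩_PT ≠ 0 then det M < 0. -/

import Mathlib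

open MeasureTheory Complex Filter

/-- The PT-product `⟨f,g⟩_PT = ∫_ℝ conj(f(-x))·g(x) dx`. -/
noncomputable def PTprod (f g : ℝ → ℂ) : ℂ :=
  ∫ x : ℝ, (starRingEnd ℂ) (f (-x)) * g x

namespace PTauxGram

lemma schwartz_bdd (f : SchwartzMap ℝ ℂ) : ∃ C, ∀ x : ℝ, ‖f x‖ ≤ C :=
  ⟨‖f.toBoundedContinuousFunction‖, fun x => by
    simpa using f.toBoundedContinuousFunction.norm_coe_le_norm x⟩

lemma schwartz_tendsto_atTop (f : SchwartzMap ℝ ℂ) : Tendsto f atTop (nhds 0) := by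
  have h : Tendsto f (Filter.cocompact ℝ) (nhds 0) := f.toZeroAtInfty.zero_at_infty'
  rw [cocompact_eq_atBot_atTop] at h
  exact h.mono_left le_sup_right

lemma schwartz_tendsto_atBot (f : SchwartzMap ℝ ℂ) : Tendsto f atBot (nhds 0) := by
  have h : Tendsto f (Filter.cocompact ℝ) (nhds 0) := f.toZeroAtInfty.zero_at_infty'
  rw [cocompact_eq_atBot_atTop] at h
  exact h.mono_left le_sup_left

lemma reflect_tendsto_atTop (f : SchwartzMap ℝ ℂ) :
    Tendsto (fun x : ℝ => (starRingEnd ℂ) (f (-x))) atTop (nhds 0) := by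
  have h : Tendsto (fun x : ℝ => f (-x)) atTop (nhds 0) :=
    (schwartz_tendsto_atBot f).comp tendsto_neg_atTop_atBot
  simpa using h.star

lemma reflect_tendsto_atBot (f : SchwartzMap ℝ ℂ) :
    Tendsto (fun x : ℝ => (starRingEnd ℂ) (f (-x))) atBot (nhds 0) := by
  have h : Tendsto (fun x : ℝ => f (-x)) atBot (nhds 0) :=
    (schwartz_tendsto_atTop f).comp tendsto_neg_atBot_atTop
  simpa using h.star

lemma reflect_meas (f : SchwartzMap ℝ ℂ) :
    AEStronglyMeasurable (fun x : ℝ => (starRingEnd ℂ) (f (-x))) volume := by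
  exact (Complex.continuous_conj.comp (f.continuous.comp continuous_neg)).aestronglyMeasurable

lemma reflect_bdd (f : SchwartzMap ℝ ℂ) : ∃ C, ∀ x : ℝ, ‖(starRingEnd ℂ) (f (-x))‖ ≤ C := by
  obtain ⟨C, hC⟩ := schwartz_bdd f
  exact ⟨C, fun x => by simpa using hC (-x)⟩

lemma hasDerivAt_reflect (u : SchwartzMap ℝ ℂ) (x : ℝ) :
    HasDerivAt (fun y : ℝ => (starRingEnd ℂ) (u (-y)))
      (-((starRingEnd ℂ) (deriv (⇑u) (-x)))) x := by
  have h0 : HasDerivAt (⇑u) (deriv (⇑u) (-x)) (-x) := u.differentiableAt.hasDerivAt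
  have h1 : HasDerivAt (fun y : ℝ => u (-y)) (-(deriv (⇑u) (-x))) x := by
    have := h0.scomp_of_eq x (hasDerivAt_neg' x) rfl
    simpa [Function.comp_def] using this
  have h2 := (Complex.conjCLE.toContinuousLinearMap.hasFDerivAt).comp_hasDerivAt x h1
  simpa [Function.comp_def, Complex.conjCLE_apply] using h2

/-- Double integration by parts against a reflected-conjugated Schwartz function. -/
lemma integral_reflect_deriv2 (f g : SchwartzMap ℝ ℂ) :
    (∫ x : ℝ, (starRingEnd ℂ) (deriv (deriv (⇑f)) (-x)) * g x)
      = ∫ x : ℝ, (starRingEnd ℂ) (f (-x)) * deriv (deriv (⇑g)) x := by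
  set f1 : SchwartzMap ℝ ℂ := SchwartzMap.derivCLM ℝ ℂ f with hf1def
  set f2 : SchwartzMap ℝ ℂ := SchwartzMap.derivCLM ℝ ℂ f1 with hf2def
  set g1 : SchwartzMap ℝ ℂ := SchwartzMap.derivCLM ℝ ℂ g with hg1def
  set g2 : SchwartzMap ℝ ℂ := SchwartzMap.derivCLM ℝ ℂ g1 with hg2def
  have hf1 : deriv (⇑f) = ⇑f1 := funext fun x => (SchwartzMap.derivCLM_apply ℝ f x).symm
  have hf2 : deriv (⇑f1) = ⇑f2 := funext fun x => (SchwartzMap.derivCLM_apply ℝ f1 x).symm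
  have hg1 : deriv (⇑g) = ⇑g1 := funext fun x => (SchwartzMap.derivCLM_apply ℝ g x).symm
  have hg2 : deriv (⇑g1) = ⇑g2 := funext fun x => (SchwartzMap.derivCLM_apply ℝ g1 x).symm
  have hdd_f : deriv (deriv (⇑f)) = ⇑f2 := by rw [hf1, hf2]
  have hdd_g : deriv (deriv (⇑g)) = ⇑g2 := by rw [hg1, hg2]
  set W : ℝ → ℂ := fun x =>
    -((starRingEnd ℂ) (f1 (-x)) * g x) - (starRingEnd ℂ) (f (-x)) * g1 x with hWdef
  set W' : ℝ → ℂ := fun x =>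
    (starRingEnd ℂ) (f2 (-x)) * g x - (starRingEnd ℂ) (f (-x)) * g2 x with hW'def
  have hW : ∀ x : ℝ, HasDerivAt W (W' x) x := by
    intro x
    have hA : HasDerivAt (fun y : ℝ => (starRingEnd ℂ) (f (-y)))
        (-((starRingEnd ℂ) (f1 (-x)))) x := by
      have := hasDerivAt_reflect f x; rwa [hf1] at this
    have hB : HasDerivAt (fun y : ℝ => (starRingEnd ℂ) (f1 (-y)))
        (-((starRingEnd ℂ) (f2 (-x)))) x := by
      have := hasDerivAt_reflect f1 x; rwa [hf2] at this
    have hg : HasDerivAt (⇑g) (g1 x) x := by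
      have := g.differentiableAt.hasDerivAt (x := x); rwa [hg1] at this
    have hgd : HasDerivAt (⇑g1) (g2 x) x := by
      have := g1.differentiableAt.hasDerivAt (x := x); rwa [hg2] at this
    have h1 := ((hB.mul hg).neg).sub (hA.mul hgd)
    refine HasDerivAt.congr_deriv (f := W) h1 ?_
    show _ = (starRingEnd ℂ) (f2 (-x)) * g x - (starRingEnd ℂ) (f (-x)) * g2 x
    ring
  have hI1 : Integrable (fun x : ℝ => (starRingEnd ℂ) (f2 (-x)) * g x) volume :=
    g.integrable.bdd_mul (reflect_meas f2) (ae_of_all _ (reflect_bdd f2).choose_spec)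
  have hI2 : Integrable (fun x : ℝ => (starRingEnd ℂ) (f (-x)) * g2 x) volume :=
    g2.integrable.bdd_mul (reflect_meas f) (ae_of_all _ (reflect_bdd f).choose_spec)
  have hW'int : Integrable W' volume := hI1.sub hI2
  have hWtop : Tendsto W atTop (nhds 0) := by
    have h1 := ((reflect_tendsto_atTop f1).neg.mul (schwartz_tendsto_atTop g)).sub
      ((reflect_tendsto_atTop f).mul (schwartz_tendsto_atTop g1))
    simpa using h1
  have hWbot : Tendsto W atBot (nhds 0) := by
    have h1 := ((reflect_tendsto_atBot f1).neg.mul (schwartz_tendsto_atBot g)).sub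
      ((reflect_tendsto_atBot f).mul (schwartz_tendsto_atBot g1))
    simpa using h1
  have key : (∫ x : ℝ, W' x) = 0 := by
    have h1 : (∫ x in Set.Ioi (0:ℝ), W' x) = 0 - W 0 :=
      integral_Ioi_of_hasDerivAt_of_tendsto' (fun x _ => hW x) hW'int.integrableOn hWtop
    have h2 : (∫ x in Set.Iic (0:ℝ), W' x) = W 0 - 0 :=
      integral_Iic_of_hasDerivAt_of_tendsto' (fun x _ => hW x) hW'int.integrableOn hWbot
    rw [← intervalIntegral.integral_Iic_add_Ioi (b := (0:ℝ)) hW'int.integrableOn hW'int.integrableOn, h1, h2]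
    ring
  have hsub : (∫ x : ℝ, W' x)
      = (∫ x : ℝ, (starRingEnd ℂ) (f2 (-x)) * g x)
        - ∫ x : ℝ, (starRingEnd ℂ) (f (-x)) * g2 x := integral_sub hI1 hI2
  rw [hdd_f, hdd_g]
  have h := hsub.symm.trans key
  exact sub_eq_zero.mp h
  
lemma PTprod_symm (f g : ℝ → ℂ) : PTprod f g = (starRingEnd ℂ) (PTprod g f) := by
  unfold PTprod
  rw [← integral_conj]
  have h2 := integral_neg_eq_self (μ := (volume : Measure ℝ))
    (fun x : ℝ => (starRingEnd ℂ) (f (-x)) * g x)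
  rw [← h2]
  congr 1
  funext x
  simp [mul_comm]

end PTauxGram

/-- At a non-diagonal Jordan block of the PT-symmetric Schrödinger operator, the Gram
matrix `M` of `(u₀, u_g)` under the PT-product has `M₁₁ = 0` and
`det M = -|⟨u₀,u_g⟩_PT|²`; in particular `det M < 0` when `⟨u₀,u_g⟩_PT ≠ 0`. -/
theorem PT_gram_exceptional_point (V : ℝ → ℂ) (hVcont : Continuous V)
    (hVbdd : ∃ C : ℝ, ∀ x : ℝ, ‖V x‖ ≤ C)
    (hVPT : ∀ x : ℝ, (starRingEnd ℂ) (V (-x)) = V x)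
    (μ₀ : ℝ) (u₀ ug : SchwartzMap ℝ ℂ)
    (hu₀ : ∀ x : ℝ, deriv (deriv u₀) x + V x * u₀ x = -(μ₀ : ℂ) * u₀ x)
    (hug : ∀ x : ℝ, deriv (deriv ug) x + V x * ug x + (μ₀ : ℂ) * ug x = u₀ x)
    (M : Matrix (Fin 2) (Fin 2) ℂ)
    (hM : M = !![PTprod (fun x => u₀ x) (fun x => u₀ x),
                 PTprod (fun x => u₀ x) (fun x => ug x);
                 PTprod (fun x => ug x) (fun x => u₀ x),
                 PTprod (fun x => ug x) (fun x => ug x)]) :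
    M 0 0 = 0 ∧
      M.det = -((‖PTprod (fun x => u₀ x) (fun x => ug x)‖ : ℂ)) ^ 2 ∧
      (PTprod (fun x => u₀ x) (fun x => ug x) ≠ 0 → (M.det).re < 0) := by
  have hVm : AEStronglyMeasurable V (volume : Measure ℝ) := hVcont.aestronglyMeasurable
  have hφm : AEStronglyMeasurable (fun x : ℝ => (starRingEnd ℂ) (u₀ (-x))) volume :=
    PTauxGram.reflect_meas u₀
  have hφb : ∃ C, ∀ x : ℝ, ‖(starRingEnd ℂ) (u₀ (-x))‖ ≤ C := PTauxGram.reflect_bdd u₀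
  set ug2 : SchwartzMap ℝ ℂ := SchwartzMap.derivCLM ℝ ℂ (SchwartzMap.derivCLM ℝ ℂ ug) with hug2def
  have hddug : deriv (deriv ⇑ug) = ⇑ug2 := by
    have h1 : deriv ⇑ug = ⇑(SchwartzMap.derivCLM ℝ ℂ ug) :=
      funext fun y => (SchwartzMap.derivCLM_apply ℝ ug y).symm
    rw [h1]
    exact funext fun y => (SchwartzMap.derivCLM_apply ℝ (SchwartzMap.derivCLM ℝ ℂ ug) y).symm
  have hI1 : Integrable
      (fun x : ℝ => (starRingEnd ℂ) (u₀ (-x)) * deriv (deriv ⇑ug) x) volume := by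
    rw [hddug]
    exact ug2.integrable.bdd_mul hφm (ae_of_all _ hφb.choose_spec)
  have hI2 : Integrable (fun x : ℝ => (starRingEnd ℂ) (u₀ (-x)) * V x * ug x) volume := by
    obtain ⟨C, hC⟩ := hφb
    obtain ⟨D, hD⟩ := hVbdd
    refine ug.integrable.bdd_mul (c := C * D) (hφm.mul hVm) (ae_of_all _ fun x => ?_)
    calc ‖(starRingEnd ℂ) (u₀ (-x)) * V x‖ = ‖(starRingEnd ℂ) (u₀ (-x))‖ * ‖V x‖ := norm_mul _ _
      _ ≤ C * D := mul_le_mul (hC x) (hD x) (norm_nonneg _)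
          (le_trans (norm_nonneg _) (hC 0))
  have hI3 : Integrable (fun x : ℝ => (starRingEnd ℂ) (u₀ (-x)) * ug x) volume :=
    ug.integrable.bdd_mul hφm (ae_of_all _ hφb.choose_spec)
  -- the pointwise identity from the Jordan-block equation for `ug`
  have e1 : ∀ x : ℝ, (starRingEnd ℂ) (u₀ (-x)) * u₀ x
      = (starRingEnd ℂ) (u₀ (-x)) * deriv (deriv ⇑ug) x
        + ((starRingEnd ℂ) (u₀ (-x)) * V x * ug x
          + (μ₀ : ℂ) * ((starRingEnd ℂ) (u₀ (-x)) * ug x)) := by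
    intro x
    have h := hug x
    have hd : deriv (deriv ⇑ug) x = u₀ x - V x * ug x - (μ₀ : ℂ) * ug x := by
      linear_combination h
    rw [hd]; ring
  -- the pointwise identity from the eigenvalue equation for `u₀`, reflected and conjugated
  have e2 : ∀ x : ℝ, (starRingEnd ℂ) (deriv (deriv ⇑u₀) (-x)) * ug x
      = -(μ₀ : ℂ) * ((starRingEnd ℂ) (u₀ (-x)) * ug x)
        - (starRingEnd ℂ) (u₀ (-x)) * V x * ug x := by
    intro x
    have h := hu₀ (-x)
    have hd : deriv (deriv ⇑u₀) (-x) = -(μ₀ : ℂ) * u₀ (-x) - V (-x) * u₀ (-x) := by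
      linear_combination h
    rw [hd, map_sub, map_mul, map_mul, map_neg, Complex.conj_ofReal, hVPT x]
    ring
  have hIBP : (∫ x : ℝ, (starRingEnd ℂ) (u₀ (-x)) * deriv (deriv ⇑ug) x)
      = ∫ x : ℝ, (starRingEnd ℂ) (deriv (deriv ⇑u₀) (-x)) * ug x :=
    (PTauxGram.integral_reflect_deriv2 u₀ ug).symm
  have hIBPval : (∫ x : ℝ, (starRingEnd ℂ) (deriv (deriv ⇑u₀) (-x)) * ug x)
      = -(μ₀ : ℂ) * (∫ x : ℝ, (starRingEnd ℂ) (u₀ (-x)) * ug x)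
        - ∫ x : ℝ, (starRingEnd ℂ) (u₀ (-x)) * V x * ug x := by
    simp_rw [e2]
    rw [integral_sub (hI3.const_mul _) hI2, integral_const_mul]
  have hI3' : Integrable
      (fun x : ℝ => (μ₀ : ℂ) * ((starRingEnd ℂ) (u₀ (-x)) * ug x)) volume :=
    hI3.const_mul _
  have hI23 : Integrable (fun x : ℝ => (starRingEnd ℂ) (u₀ (-x)) * V x * ug x
      + (μ₀ : ℂ) * ((starRingEnd ℂ) (u₀ (-x)) * ug x)) volume := hI2.add hI3'
  have ha : PTprod (fun x => u₀ x) (fun x => u₀ x) = 0 := by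
    have h0 : PTprod (fun x => u₀ x) (fun x => u₀ x)
        = ∫ x : ℝ, (starRingEnd ℂ) (u₀ (-x)) * u₀ x := rfl
    rw [h0]
    simp_rw [e1]
    rw [integral_add hI1 hI23, integral_add hI2 hI3', integral_const_mul, hIBP, hIBPval]
    ring
  have hc : PTprod (fun x => ug x) (fun x => u₀ x)
      = (starRingEnd ℂ) (PTprod (fun x => u₀ x) (fun x => ug x)) :=
    PTauxGram.PTprod_symm _ _
  set b := PTprod (fun x => u₀ x) (fun x => ug x) with hbdef
  have hdet : M.det = -((‖b‖ : ℂ)) ^ 2 := by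
    rw [hM, Matrix.det_fin_two_of, ha, hc, Complex.mul_conj]
    have hnb : (Complex.normSq b : ℂ) = ((‖b‖ : ℂ)) ^ 2 := by
      rw [← Complex.sq_norm]
      push_cast
      ring
    rw [hnb]
    ring
  refine ⟨?_, hdet, ?_⟩
  · rw [hM]
    simpa using ha
  · intro hbne
    rw [hdet]
    have h1 : (-((‖b‖ : ℂ)) ^ 2).re = -(‖b‖ ^ 2) := by
      simp [← Complex.ofReal_pow]
    rw [h1]
    have : (0 : ℝ) < ‖b‖ ^ 2 := pow_pos (norm_pos_iff.mpr hbne) 2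
    linarith
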